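/- Let $\tau$ be a random time, $(\mathcal{H}_t)$ the filtration generated by $(\mathbf{1}_{\{\tau \le s\}})_{s \le t}$, $\mathcal{A} \subseteq \mathcal{G}$ an arbitrary sub-$\sigma$-algebra, and $Y$ an integrable random variable. Then a.s. $E[\mathbf{1}_{\{\tau \le t\}} Y \mid \mathcal{H}_t \vee \mathcal{A}] = E[\mathbf{1}_{\{\tau \le t\}} Y \mid \sigma(\tau) \vee \mathcal{A}]$. -/

import Mathlib

open MeasureTheory ProbabilityTheory Set

/-- on `{τ ≤ t}`, conditioning on the partial observation `ℋ_t ∨ 𝓐` of the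
random time `τ` is the same as conditioning on full knowledge `σ(τ) ∨ 𝓐`:
`E[1_{τ≤t} Y | ℋ_t ∨ 𝓐] = E[1_{τ≤t} Y | σ(τ) ∨ 𝓐]` a.s. -/
theorem condexp_after_jump_partial_eq_full
    {Ω : Type*} {m0 : MeasurableSpace Ω} (P : Measure Ω) [IsProbabilityMeasure P]
    (τ : Ω → ℝ) (hτ : Measurable τ)
    (𝓐 : MeasurableSpace Ω) (h𝓐 : 𝓐 ≤ m0)
    (t : ℝ) (Y : Ω → ℝ) (hYint : Integrable Y P) :
    (P[(fun ω => Set.indicator {ω' | τ ω' ≤ t} (fun _ => (1 : ℝ)) ω * Y ω) |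
        (⨆ (s : ℝ) (_ : s ≤ t),
          MeasurableSpace.comap (Set.indicator {ω' | τ ω' ≤ s} fun _ => (1 : ℝ)) inferInstance) ⊔ 𝓐])
      =ᵐ[P]
    (P[(fun ω => Set.indicator {ω' | τ ω' ≤ t} (fun _ => (1 : ℝ)) ω * Y ω) |
        MeasurableSpace.comap τ inferInstance ⊔ 𝓐]) := by
  set S : Set Ω := {ω' | τ ω' ≤ t} with hS
  have hSmeas : MeasurableSet[m0] S := measurableSet_le hτ measurable_const
  have hXint : Integrable (S.indicator Y) P := by
    have := hYint.indicator hSmeas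
    exact this
  set ℋt : MeasurableSpace Ω := ⨆ (s : ℝ) (_ : s ≤ t),
      MeasurableSpace.comap (Set.indicator {ω' | τ ω' ≤ s} fun _ => (1 : ℝ)) inferInstance with hℋt
  set m1 : MeasurableSpace Ω := ℋt ⊔ 𝓐 with hm1def
  set m2 : MeasurableSpace Ω := MeasurableSpace.comap τ inferInstance ⊔ 𝓐 with hm2def
  -- the function in the statement is `S.indicator Y`
  have hfun : (fun ω => Set.indicator {ω' | τ ω' ≤ t} (fun _ => (1 : ℝ)) ω * Y ω)
      = S.indicator Y := by
    funext ω
    by_cases h : ω ∈ S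
    · simp [Set.indicator_of_mem, show ω ∈ {ω' | τ ω' ≤ t} from h, h]
    · simp [Set.indicator_of_notMem, show ω ∉ {ω' | τ ω' ≤ t} from h, h]
  -- each generating comap lies in `m0` and in `comap τ`
  have hind_meas : ∀ s : ℝ, s ≤ t →
      MeasurableSpace.comap (Set.indicator {ω' | τ ω' ≤ s} fun _ => (1 : ℝ)) inferInstance
        ≤ MeasurableSpace.comap τ inferInstance := by
    intro s _
    have hτ' : Measurable[MeasurableSpace.comap τ inferInstance] τ :=
      Measurable.of_comap_le le_rfl
    have : Measurable[MeasurableSpace.comap τ inferInstance]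
        (Set.indicator {ω' | τ ω' ≤ s} fun _ => (1 : ℝ)) := by
      exact (measurable_const).indicator (measurableSet_le hτ' measurable_const)
    exact Measurable.comap_le this
  have hℋt_le_comapτ : ℋt ≤ MeasurableSpace.comap τ inferInstance := by
    rw [hℋt]
    exact iSup_le fun s => iSup_le fun hs => hind_meas s hs
  have hcomapτ_le : MeasurableSpace.comap τ inferInstance ≤ m0 := Measurable.comap_le hτ
  have hm2 : m2 ≤ m0 := sup_le hcomapτ_le h𝓐
  have hm12 : m1 ≤ m2 := sup_le_sup_right hℋt_le_comapτ 𝓐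
  have hm1 : m1 ≤ m0 := hm12.trans hm2
  -- `{τ ≤ s} ∈ ℋt` for each `s ≤ t`
  have hτs_mem : ∀ s : ℝ, s ≤ t → MeasurableSet[ℋt] {ω' | τ ω' ≤ s} := by
    intro s hs
    have hle : MeasurableSpace.comap (Set.indicator {ω' | τ ω' ≤ s} fun _ => (1 : ℝ))
        inferInstance ≤ ℋt := by
      rw [hℋt]
      exact le_iSup_of_le s (le_iSup_of_le hs le_rfl)
    refine hle _ ⟨{1}, measurableSet_singleton 1, ?_⟩
    ext ω
    by_cases h : ω ∈ {ω' | τ ω' ≤ s}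
    · simp [Set.indicator_of_mem, h]
    · simp [Set.indicator_of_notMem, h, h]
  have hSℋt : MeasurableSet[ℋt] S := hτs_mem t le_rfl
  have hSm1 : MeasurableSet[m1] S := (le_sup_left : ℋt ≤ m1) _ hSℋt
  -- key fact: `A ∈ m2 → A ∩ S ∈ m1`
  have hkey : ∀ A : Set Ω, MeasurableSet[m2] A → MeasurableSet[m1] (A ∩ S) := by
    -- first on the real line: Borel sets `B` satisfy `τ⁻¹ B ∩ S ∈ ℋt`
    have hreal : ∀ B : Set ℝ, MeasurableSet B → MeasurableSet[ℋt] (τ ⁻¹' B ∩ S) := by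
      let E : MeasurableSpace ℝ :=
        { MeasurableSet' := fun B => MeasurableSet[ℋt] (τ ⁻¹' B ∩ S)
          measurableSet_empty := by simp
          measurableSet_compl := by
            intro B hB
            have : τ ⁻¹' Bᶜ ∩ S = S \ (τ ⁻¹' B ∩ S) := by
              ext ω; by_cases h : τ ω ∈ B <;> simp [h]
            rw [this]
            exact hSℋt.diff hB
          measurableSet_iUnion := by
            intro f hf
            have : τ ⁻¹' (⋃ i, f i) ∩ S = ⋃ i, (τ ⁻¹' (f i) ∩ S) := by
              simp [Set.preimage_iUnion, Set.iUnion_inter]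
            rw [this]
            exact MeasurableSet.iUnion hf }
      intro B hB
      have hE : (borel ℝ : MeasurableSpace ℝ) ≤ E := by
        rw [borel_eq_generateFrom_Iic ℝ]
        refine MeasurableSpace.generateFrom_le ?_
        rintro _ ⟨b, rfl⟩
        show MeasurableSet[ℋt] (τ ⁻¹' Set.Iic b ∩ S)
        have : τ ⁻¹' Set.Iic b ∩ S = {ω' | τ ω' ≤ min b t} := by
          ext ω; simp [hS, le_min_iff]
        rw [this]
        exact hτs_mem _ (min_le_right b t)
      exact hE B hB
    -- now the σ-algebra of sets with the desired property
    let D : MeasurableSpace Ω :=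
      { MeasurableSet' := fun A => MeasurableSet[m1] (A ∩ S)
        measurableSet_empty := by simp
        measurableSet_compl := by
          intro A hA
          have : Aᶜ ∩ S = S \ (A ∩ S) := by
            ext ω; by_cases h : ω ∈ A <;> simp [h]
          rw [this]
          exact hSm1.diff hA
        measurableSet_iUnion := by
          intro f hf
          rw [Set.iUnion_inter]
          exact MeasurableSet.iUnion hf }
    have hD : m2 ≤ D := by
      rw [hm2def]
      refine sup_le ?_ ?_
      · rintro _ ⟨B, hB, rfl⟩
        exact (le_sup_left : ℋt ≤ m1) _ (hreal B hB)
      · intro A hA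
        exact ((le_sup_right : 𝓐 ≤ m1) _ hA).inter hSm1
    intro A hA
    exact hD A hA
  haveI : SigmaFinite (P.trim hm2) := by infer_instance
  haveI : SigmaFinite (P.trim hm1) := by infer_instance
  rw [hfun]
  letI : MeasurableSpace Ω := m0
  -- conclude via the characterization of conditional expectation
  refine (ae_eq_condExp_of_forall_setIntegral_eq hm2 hXint ?_ ?_
    (StronglyMeasurable.aestronglyMeasurable (stronglyMeasurable_condExp.mono hm12)
      ))
  · intro A _ _
    exact integrable_condExp.integrableOn
  · intro A hA _
    have h1 : P[S.indicator Y|m1] =ᵐ[P] S.indicator (P[Y|m1]) := condExp_indicator hYint hSm1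
    calc ∫ x in A, (P[S.indicator Y|m1]) x ∂P
        = ∫ x in A, S.indicator (P[Y|m1]) x ∂P := by
          exact setIntegral_congr_ae (hm2 A hA) (h1.mono fun x hx _ => hx)
      _ = ∫ x in A ∩ S, (P[Y|m1]) x ∂P := by
          exact setIntegral_indicator hSmeas
      _ = ∫ x in A ∩ S, Y x ∂P := by
          exact setIntegral_condExp hm1 hYint (hkey A hA)
      _ = ∫ x in A, S.indicator Y x ∂P := by
          exact (setIntegral_indicator hSmeas).symm
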